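/- arXiv:0904.3137 — 2 statements merged into one kernel-verified Lean document; each statement's English description precedes it below -/
import Mathlib

section
/- Every closed category (in the sense where γ is required to be a bijection, axiom CC5) is isomorphic, as a closed category, to a closed category in the sense of Eilenberg and Kelly, i.e. one equipped with a functor C : W → Set satisfying CC0 (C ∘ W̲(-,-) = W(-,-)) and CC5' (C i_{W̲(X,X)} sends 1_X to j_X). -/
open CategoryTheory Opposite

universe v u

/-- The data of a closed category in the sense of Eilenberg–Kelly / Street / Laplaza:
an internal hom functor, a unit object, and the transformations `i`, `j`, `L`. -/
structure ClosedStruct (C : Type u) [Category.{v} C] where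
  ihom : Cᵒᵖ × C ⥤ C
  unit : C
  i : ∀ X : C, X ≅ ihom.obj (op unit, X)
  j : ∀ X : C, unit ⟶ ihom.obj (op X, X)
  L : ∀ X Y Z : C,
    ihom.obj (op Y, Z) ⟶ ihom.obj (op (ihom.obj (op X, Y)), ihom.obj (op X, Z))

namespace ClosedStruct

variable {C : Type u} [Category.{v} C] (S : ClosedStruct C)

/-- Internal hom object. -/
def h (X Y : C) : C := S.ihom.obj (op X, Y)

/-- Covariant action `C(1,g)` of the internal hom functor. -/
def mapR (X : C) {Y Z : C} (g : Y ⟶ Z) : S.h X Y ⟶ S.h X Z :=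
  S.ihom.map (𝟙 (op X), g)

/-- Contravariant action `C(f,1)` of the internal hom functor. -/
def mapL {X Y : C} (f : X ⟶ Y) (Z : C) : S.h Y Z ⟶ S.h X Z :=
  S.ihom.map (f.op, 𝟙 Z)

/-- The map `γ : C(X,Y) → C(1, C(X,Y))`, `f ↦ j_X ≫ C(1,f)`. -/
def gamma {X Y : C} (f : X ⟶ Y) : S.unit ⟶ S.h X Y := S.j X ≫ S.mapR X f

end ClosedStruct

/-- The axioms making a `ClosedStruct` into a closed category:
naturality/dinaturality of `i`, `j`, `L` and the axioms CC1–CC5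
(CC5 : `γ` is a bijection). -/
structure IsClosedCat {C : Type u} [Category.{v} C] (S : ClosedStruct C) : Prop where
  i_nat : ∀ {X Y : C} (f : X ⟶ Y),
    f ≫ (S.i Y).hom = (S.i X).hom ≫ S.mapR S.unit f
  j_dinat : ∀ {X Y : C} (f : X ⟶ Y),
    S.j X ≫ S.mapR X f = S.j Y ≫ S.mapL f Y
  L_nat : ∀ (X : C) {Y Y' Z Z' : C} (f : Y' ⟶ Y) (g : Z ⟶ Z'),
    S.ihom.map (f.op, g) ≫ S.L X Y' Z'
      = S.L X Y Z ≫ S.ihom.map (Y := (op (S.h X Y'), S.h X Z')) ((S.mapR X f).op, S.mapR X g)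
  L_dinat : ∀ {X X' : C} (f : X ⟶ X') (Y Z : C),
    S.L X Y Z ≫ S.mapL (S.mapL f Y) (S.h X Z)
      = S.L X' Y Z ≫ S.mapR (S.h X' Y) (S.mapL f Z)
  cc1 : ∀ X Y : C, S.j Y ≫ S.L X Y Y = S.j (S.h X Y)
  cc2 : ∀ X Y : C, S.L X X Y ≫ S.mapL (S.j X) (S.h X Y) = (S.i (S.h X Y)).hom
  cc3 : ∀ X Y U V : C,
    S.L Y U V ≫ S.mapR (S.h Y U) (S.L X Y V)
      = S.L X U V ≫ S.L (S.h X Y) (S.h X U) (S.h X V)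
          ≫ S.mapL (S.L X Y U) (S.h (S.h X Y) (S.h X V))
  cc4 : ∀ Y Z : C,
    S.L S.unit Y Z ≫ S.mapL (S.i Y).hom (S.h S.unit Z) = S.mapR Y (S.i Z).hom
  cc5 : ∀ X Y : C, Function.Bijective (fun f : X ⟶ Y => S.gamma f)

universe v' u'

/-- The data of a closed functor `(φ, φ̂, φ⁰)` between closed categories. -/
structure ClosedFunctorData {C : Type u} [Category.{v} C] {D : Type u'} [Category.{v'} D]
    (S : ClosedStruct C) (T : ClosedStruct D) : Type (max u v u' v') where
  F : C ⥤ D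
  Fhat : ∀ X Y : C, F.obj (S.h X Y) ⟶ T.h (F.obj X) (F.obj Y)
  F0 : T.unit ⟶ F.obj S.unit

/-- The axioms of a closed functor: naturality of `φ̂` and CF1–CF3. -/
structure IsClosedFunctor {C : Type u} [Category.{v} C] {D : Type u'} [Category.{v'} D]
    (S : ClosedStruct C) (T : ClosedStruct D) (Φ : ClosedFunctorData S T) : Prop where
  Fhat_nat : ∀ {X X' Y Y' : C} (f : X' ⟶ X) (g : Y ⟶ Y'),
    Φ.F.map (S.ihom.map (f.op, g)) ≫ Φ.Fhat X' Y'
      = Φ.Fhat X Y ≫ T.ihom.map ((Φ.F.map f).op, Φ.F.map g)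
  cf1 : ∀ X : C, Φ.F0 ≫ Φ.F.map (S.j X) ≫ Φ.Fhat X X = T.j (Φ.F.obj X)
  cf2 : ∀ X : C,
    Φ.F.map (S.i X).hom ≫ Φ.Fhat S.unit X ≫ T.mapL Φ.F0 (Φ.F.obj X)
      = (T.i (Φ.F.obj X)).hom
  cf3 : ∀ X Y Z : C,
    Φ.F.map (S.L X Y Z) ≫ Φ.Fhat (S.h X Y) (S.h X Z)
        ≫ T.mapR (Φ.F.obj (S.h X Y)) (Φ.Fhat X Z)
      = Φ.Fhat Y Z ≫ T.L (Φ.F.obj X) (Φ.F.obj Y) (Φ.F.obj Z)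
        ≫ T.mapL (Φ.Fhat X Y) (T.h (Φ.F.obj X) (Φ.F.obj Z))

/-- The identity closed functor. -/
def ClosedFunctorData.idCF {C : Type u} [Category.{v} C] (S : ClosedStruct C) :
    ClosedFunctorData S S where
  F := 𝟭 C
  Fhat := fun _ _ => 𝟙 _
  F0 := 𝟙 _

/-- Composition of closed functors. -/
def ClosedFunctorData.comp {C : Type u} [Category.{v} C] {D : Type u'} [Category.{v'} D]
    {E : Type u'} [Category.{v'} E] {S : ClosedStruct C} {T : ClosedStruct D}
    {R : ClosedStruct E} (Φ : ClosedFunctorData S T) (Ψ : ClosedFunctorData T R) :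
    ClosedFunctorData S R where
  F := Φ.F ⋙ Ψ.F
  Fhat := fun X Y => Ψ.F.map (Φ.Fhat X Y) ≫ Ψ.Fhat (Φ.F.obj X) (Φ.F.obj Y)
  F0 := Ψ.F0 ≫ Ψ.F.map Φ.F0

namespace EKProof

variable {C : Type u} [Category.{v} C]

attribute [reducible] ClosedStruct.h

theorem mapR_id (S : ClosedStruct C) (X X' : C) : S.mapR X (𝟙 X') = 𝟙 (S.h X X') := by
  show S.ihom.map (𝟙 (op X, X')) = _
  rw [S.ihom.map_id]

theorem mapL_id (S : ClosedStruct C) (X Z : C) : S.mapL (𝟙 X) Z = 𝟙 (S.h X Z) := by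
  show S.ihom.map (𝟙 (op X, Z)) = _
  rw [S.ihom.map_id]

theorem mapR_comp (S : ClosedStruct C) (X : C) {A B D : C} (f : A ⟶ B) (g : B ⟶ D) :
    S.mapR X (f ≫ g) = S.mapR X f ≫ S.mapR X g := by
  rw [ClosedStruct.mapR, ClosedStruct.mapR, ClosedStruct.mapR, ← S.ihom.map_comp,
    prod_comp]
  simp only [Category.comp_id]

theorem map_pairL (S : ClosedStruct C) {X' X Y Y' : C} (a : X' ⟶ X) (b : Y ⟶ Y') :
    S.ihom.map (a.op, b) = S.mapL a Y ≫ S.mapR X' b := by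
  rw [ClosedStruct.mapL, ClosedStruct.mapR, ← S.ihom.map_comp, prod_comp]
  simp

theorem map_pairR (S : ClosedStruct C) {X' X Y Y' : C} (a : X' ⟶ X) (b : Y ⟶ Y') :
    S.ihom.map (a.op, b) = S.mapR X b ≫ S.mapL a Y' := by
  rw [ClosedStruct.mapL, ClosedStruct.mapR, ← S.ihom.map_comp, prod_comp]
  simp

theorem gamma_id (S : ClosedStruct C) (X : C) : S.gamma (𝟙 X) = S.j X := by
  rw [ClosedStruct.gamma, mapR_id]; exact Category.comp_id _

theorem gamma_comp_right (S : ClosedStruct C) {X Y Y' : C} (v : X ⟶ Y) (b : Y ⟶ Y') :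
    S.gamma (v ≫ b) = S.gamma v ≫ S.mapR X b := by
  rw [ClosedStruct.gamma, ClosedStruct.gamma, mapR_comp, Category.assoc]

theorem gamma_comp_left (S : ClosedStruct C) (hS : IsClosedCat S) {X' X Y : C}
    (a : X' ⟶ X) (w : X ⟶ Y) :
    S.gamma (a ≫ w) = S.gamma w ≫ S.mapL a Y := by
  rw [ClosedStruct.gamma, ClosedStruct.gamma, mapR_comp, ← Category.assoc, hS.j_dinat a,
    Category.assoc, Category.assoc, ← map_pairL, map_pairR]

theorem gamma_three (S : ClosedStruct C) (hS : IsClosedCat S) {X' X Y Y' : C}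
    (a : X' ⟶ X) (v : X ⟶ Y) (b : Y ⟶ Y') :
    S.gamma (a ≫ v ≫ b) = S.gamma v ≫ S.ihom.map (a.op, b) := by
  rw [gamma_comp_left S hS, gamma_comp_right, Category.assoc, ← map_pairR]

theorem i_unit_eq_j_unit (S : ClosedStruct C) (hS : IsClosedCat S) :
    (S.i S.unit).hom = S.j S.unit := by
  apply (hS.cc5 S.unit (S.h S.unit S.unit)).1
  show S.gamma _ = S.gamma _
  have h1 : S.mapR S.unit (S.i S.unit).hom = (S.i (S.h S.unit S.unit)).hom :=
    ((cancel_epi (S.i S.unit).hom).mp (hS.i_nat (S.i S.unit).hom)).symm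
  have h2 : S.gamma (S.j S.unit) = S.j S.unit ≫ (S.i (S.h S.unit S.unit)).hom := by
    have c1 := hS.cc1 S.unit S.unit
    have c2 := hS.cc2 S.unit S.unit
    simp only [ClosedStruct.h] at c1 c2
    rw [ClosedStruct.gamma, hS.j_dinat (S.j S.unit), ← c1, Category.assoc, c2]
  rw [h2, ClosedStruct.gamma, h1]

theorem j_comp_i (S : ClosedStruct C) (hS : IsClosedCat S) (X : C) :
    S.j X ≫ (S.i (S.h X X)).hom = S.gamma (S.j X) := by
  simp only [ClosedStruct.h]
  rw [hS.i_nat (S.j X), i_unit_eq_j_unit S hS]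
  rfl

/-- The bijection `γ : C(X,Y) ≃ C(I, C(X,Y))` as an equivalence. -/
noncomputable def ge (S : ClosedStruct C) (hS : IsClosedCat S) (X Y : C) :
    (X ⟶ Y) ≃ (S.unit ⟶ S.h X Y) :=
  Equiv.ofBijective _ (hS.cc5 X Y)

theorem ge_apply (S : ClosedStruct C) (hS : IsClosedCat S) {X Y : C} (f : X ⟶ Y) :
    ge S hS X Y f = S.gamma f := rfl

/-- The Eilenberg–Kelly model: same objects as `C` (wrapped), hom-sets `C(I, C(X,Y))`. -/
structure EK (S : ClosedStruct C) (hS : IsClosedCat S) : Type u where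
  obj : C

section

variable (S : ClosedStruct C) (hS : IsClosedCat S)

noncomputable instance EKcat : Category.{v} (EK S hS) where
  Hom X Y := S.unit ⟶ S.h X.obj Y.obj
  id X := S.j X.obj
  comp {X Y Z} f g :=
    ge S hS X.obj Z.obj ((ge S hS X.obj Y.obj).symm f ≫ (ge S hS Y.obj Z.obj).symm g)
  id_comp {X Y} f := by
    show ge S hS X.obj Y.obj
      ((ge S hS X.obj X.obj).symm (S.j X.obj) ≫ (ge S hS X.obj Y.obj).symm f) = f
    rw [← gamma_id S X.obj, ← ge_apply S hS, Equiv.symm_apply_apply, Category.id_comp,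
      Equiv.apply_symm_apply]
  comp_id {X Y} f := by
    show ge S hS X.obj Y.obj
      ((ge S hS X.obj Y.obj).symm f ≫ (ge S hS Y.obj Y.obj).symm (S.j Y.obj)) = f
    rw [← gamma_id S Y.obj, ← ge_apply S hS, Equiv.symm_apply_apply, Category.comp_id,
      Equiv.apply_symm_apply]
  assoc {X Y Z W} f g h := by
    show ge S hS X.obj W.obj ((ge S hS X.obj Z.obj).symm (ge S hS X.obj Z.obj _) ≫ _)
      = ge S hS X.obj W.obj (_ ≫ (ge S hS Y.obj W.obj).symm (ge S hS Y.obj W.obj _))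
    rw [Equiv.symm_apply_apply, Equiv.symm_apply_apply, Category.assoc]

@[simp] theorem EK_comp_def {X Y Z : EK S hS} (f : X ⟶ Y) (g : Y ⟶ Z) :
    f ≫ g = ge S hS X.obj Z.obj
      ((ge S hS X.obj Y.obj).symm f ≫ (ge S hS Y.obj Z.obj).symm g) := rfl

@[simp] theorem EK_id_ge (X : EK S hS) :
    (𝟙 X : X ⟶ X) = ge S hS X.obj X.obj (𝟙 X.obj) := by
  show S.j X.obj = _
  rw [ge_apply, gamma_id]

@[simp] theorem ge_symm_id (X : EK S hS) :
    (ge S hS X.obj X.obj).symm (𝟙 X : X ⟶ X) = 𝟙 X.obj := by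
  rw [EK_id_ge, Equiv.symm_apply_apply]

theorem ge_comp {X Y Z : EK S hS} (f : X.obj ⟶ Y.obj) (g : Y.obj ⟶ Z.obj) :
    (ge S hS X.obj Y.obj f ≫ ge S hS Y.obj Z.obj g : X ⟶ Z)
      = ge S hS X.obj Z.obj (f ≫ g) := by
  rw [EK_comp_def, Equiv.symm_apply_apply, Equiv.symm_apply_apply]

theorem ge_symm_comp {X Y Z : EK S hS} (f : X ⟶ Y) (g : Y ⟶ Z) :
    (ge S hS X.obj Z.obj).symm ((f ≫ g : X ⟶ Z))
      = (ge S hS X.obj Y.obj).symm f ≫ (ge S hS Y.obj Z.obj).symm g := by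
  rw [EK_comp_def, Equiv.symm_apply_apply]

noncomputable def Efun : C ⥤ EK S hS where
  obj X := ⟨X⟩
  map {X Y} f := ge S hS X Y f
  map_id X := (EK_id_ge S hS ⟨X⟩).symm
  map_comp {X Y Z} f g := (ge_comp S hS (X := ⟨X⟩) (Y := ⟨Y⟩) (Z := ⟨Z⟩) f g).symm

noncomputable def E'fun : EK S hS ⥤ C where
  obj X := X.obj
  map {X Y} f := (ge S hS X.obj Y.obj).symm f
  map_id := ge_symm_id S hS
  map_comp := ge_symm_comp S hS

/-- The transported closed structure on `EK S hS`. -/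
noncomputable def Tstr : ClosedStruct (EK S hS) where
  ihom := (((E'fun S hS).op.prod (E'fun S hS)) ⋙ S.ihom) ⋙ Efun S hS
  unit := ⟨S.unit⟩
  i := fun X => (Efun S hS).mapIso (S.i X.obj)
  j := fun X => ge S hS S.unit (S.h X.obj X.obj) (S.j X.obj)
  L := fun X Y Z => ge S hS (S.h Y.obj Z.obj) (S.h (S.h X.obj Y.obj) (S.h X.obj Z.obj))
    (S.L X.obj Y.obj Z.obj)

@[simp] theorem Tstr_unit : (Tstr S hS).unit = ⟨S.unit⟩ := rfl

@[simp] theorem Tstr_ihom_obj (p : (EK S hS)ᵒᵖ × EK S hS) :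
    (Tstr S hS).ihom.obj p = ⟨S.h p.1.unop.obj p.2.obj⟩ := rfl

@[simp] theorem Tstr_h (X Y : EK S hS) :
    (Tstr S hS).h X Y = ⟨S.h X.obj Y.obj⟩ := rfl

theorem ihom_obj_h (a : Cᵒᵖ) (b : C) : S.ihom.obj (a, b) = S.h a.unop b := rfl

@[simp] theorem Tstr_ihom_map {p q : (EK S hS)ᵒᵖ × EK S hS} (f : p ⟶ q) :
    (Tstr S hS).ihom.map f
      = ge S hS (S.h p.1.unop.obj p.2.obj) (S.h q.1.unop.obj q.2.obj)
        (S.ihom.map (((ge S hS q.1.unop.obj p.1.unop.obj).symm f.1.unop).op,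
          (ge S hS p.2.obj q.2.obj).symm f.2)) := rfl

@[simp] theorem Tstr_j (X : EK S hS) :
    (Tstr S hS).j X = ge S hS S.unit (S.h X.obj X.obj) (S.j X.obj) := rfl

@[simp] theorem Tstr_L (X Y Z : EK S hS) :
    (Tstr S hS).L X Y Z
      = ge S hS (S.h Y.obj Z.obj) (S.h (S.h X.obj Y.obj) (S.h X.obj Z.obj))
        (S.L X.obj Y.obj Z.obj) := rfl

@[simp] theorem Tstr_i_hom (X : EK S hS) :
    ((Tstr S hS).i X).hom = ge S hS X.obj (S.h S.unit X.obj) (S.i X.obj).hom := rfl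

@[simp] theorem Tstr_i_inv (X : EK S hS) :
    ((Tstr S hS).i X).inv = ge S hS (S.h S.unit X.obj) X.obj (S.i X.obj).inv := rfl

attribute [simp] mapR_id mapL_id

@[simp] theorem Tstr_mapR (X : EK S hS) {Y Z : EK S hS} (g : Y ⟶ Z) :
    (Tstr S hS).mapR X g
      = ge S hS (S.h X.obj Y.obj) (S.h X.obj Z.obj)
        (S.mapR X.obj ((ge S hS Y.obj Z.obj).symm g)) := by
  simp only [ClosedStruct.mapR, Tstr_ihom_map]
  simp

@[simp] theorem Tstr_mapL {X Y : EK S hS} (f : X ⟶ Y) (Z : EK S hS) :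
    (Tstr S hS).mapL f Z
      = ge S hS (S.h Y.obj Z.obj) (S.h X.obj Z.obj)
        (S.mapL ((ge S hS X.obj Y.obj).symm f) Z.obj) := by
  simp only [ClosedStruct.mapL, Tstr_ihom_map]
  simp

theorem Tstr_closed : IsClosedCat (Tstr S hS) := by
  refine ⟨?_, ?_, ?_, ?_, ?_, ?_, ?_, ?_, ?_⟩
  · intro X Y f
    simp [hS.i_nat ((ge S hS X.obj Y.obj).symm f)]
  · intro X Y f
    simp [hS.j_dinat ((ge S hS X.obj Y.obj).symm f)]
  · intro X Y Y' Z Z' f g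
    simp [hS.L_nat X.obj ((ge S hS Y'.obj Y.obj).symm f) ((ge S hS Z.obj Z'.obj).symm g)]
  · intro X X' f Y Z
    simp [hS.L_dinat ((ge S hS X.obj X'.obj).symm f) Y.obj Z.obj]
  · intro X Y
    simp [hS.cc1 X.obj Y.obj]
  · intro X Y
    simp [hS.cc2 X.obj Y.obj]
  · intro X Y U V
    simp [hS.cc3 X.obj Y.obj U.obj V.obj]
  · intro Y Z
    simp [hS.cc4 Y.obj Z.obj]
  · intro X Y
    have h : ∀ f : X ⟶ Y, (Tstr S hS).gamma f = ge S hS S.unit (S.h X.obj Y.obj) f := by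
      intro f
      simp only [ClosedStruct.gamma, Tstr_j, Tstr_mapR, EK_comp_def, Tstr_unit,
        Tstr_h, Tstr_ihom_obj, Equiv.symm_apply_apply]
      rw [show S.j X.obj ≫ S.mapR X.obj ((ge S hS X.obj Y.obj).symm f)
          = ge S hS X.obj Y.obj ((ge S hS X.obj Y.obj).symm f) from rfl,
        Equiv.apply_symm_apply]
    have h2 : (fun f : X ⟶ Y => (Tstr S hS).gamma f)
        = ge S hS S.unit (S.h X.obj Y.obj) := funext h
    rw [h2]
    exact (ge S hS _ _).bijective

noncomputable def U : EK S hS ⥤ Type v where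
  obj X := S.unit ⟶ X.obj
  map {X Y} f := TypeCat.ofHom fun u => u ≫ (ge S hS X.obj Y.obj).symm f
  map_id X := by
    ext u
    simp
  map_comp {X Y Z} f g := by
    ext u
    simp [ge_symm_comp]

theorem cc0 : (Tstr S hS).ihom ⋙ U S hS = Functor.hom (EK S hS) := by
  refine CategoryTheory.Functor.ext (fun p => rfl) ?_
  intro p q f
  show ((Tstr S hS).ihom ⋙ U S hS).map f = (Functor.hom (EK S hS)).map f
  ext (u : S.unit ⟶ S.h p.1.unop.obj p.2.obj)
  show u ≫ (ge S hS _ _).symm ((Tstr S hS).ihom.map f) = f.1.unop ≫ u ≫ f.2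
  simp only [Tstr_ihom_map, Tstr_ihom_obj, Equiv.symm_apply_apply, EK_comp_def]
  erw [Equiv.symm_apply_apply]
  rw [ge_apply, gamma_three S hS, ← ge_apply S hS, Equiv.apply_symm_apply]

theorem cc5' (X : EK S hS) :
    (U S hS).map ((Tstr S hS).i ((Tstr S hS).h X X)).hom
        (cast (congrArg (fun (Fc : (EK S hS)ᵒᵖ × EK S hS ⥤ Type v) => Fc.obj (op X, X))
          (cc0 S hS)).symm (𝟙 X))
      = cast (congrArg (fun (Fc : (EK S hS)ᵒᵖ × EK S hS ⥤ Type v) =>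
          Fc.obj (op (Tstr S hS).unit, (Tstr S hS).h X X)) (cc0 S hS)).symm
          ((Tstr S hS).j X) := by
  refine Eq.trans ?_ (eq_of_heq (cast_heq _ _)).symm
  refine Eq.trans (congrArg _ (eq_of_heq (cast_heq _ _))) ?_
  show @CategoryStruct.comp C _ S.unit (S.h X.obj X.obj) (S.h S.unit (S.h X.obj X.obj))
      (𝟙 X : X ⟶ X)
      ((ge S hS (S.h X.obj X.obj) (S.h S.unit (S.h X.obj X.obj))).symm
        (((Tstr S hS).i ((Tstr S hS).h X X)).hom))
    = (Tstr S hS).j X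
  simp only [Tstr_i_hom, Tstr_h, Tstr_j, Equiv.symm_apply_apply]
  rw [EK_id_ge, ge_apply, gamma_id, ge_apply, j_comp_i S hS]

noncomputable def PhiD : ClosedFunctorData S (Tstr S hS) where
  F := Efun S hS
  Fhat := fun _ _ => 𝟙 _
  F0 := 𝟙 _

noncomputable def PsiD : ClosedFunctorData (Tstr S hS) S where
  F := E'fun S hS
  Fhat := fun _ _ => 𝟙 _
  F0 := 𝟙 _

@[simp] theorem Efun_obj (X : C) : (Efun S hS).obj X = ⟨X⟩ := rfl
@[simp] theorem Efun_map {X Y : C} (f : X ⟶ Y) : (Efun S hS).map f = ge S hS X Y f := rfl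
@[simp] theorem E'fun_obj (X : EK S hS) : (E'fun S hS).obj X = X.obj := rfl
@[simp] theorem E'fun_map {X Y : EK S hS} (f : X ⟶ Y) :
    (E'fun S hS).map f = (ge S hS X.obj Y.obj).symm f := rfl
@[simp] theorem PhiD_F : (PhiD S hS).F = Efun S hS := rfl
@[simp] theorem PhiD_Fhat (X Y : C) : (PhiD S hS).Fhat X Y = 𝟙 _ := rfl
@[simp] theorem PhiD_F0 : (PhiD S hS).F0 = 𝟙 _ := rfl
@[simp] theorem PsiD_F : (PsiD S hS).F = E'fun S hS := rfl
@[simp] theorem PsiD_Fhat (X Y : EK S hS) : (PsiD S hS).Fhat X Y = 𝟙 _ := rfl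
@[simp] theorem PsiD_F0 : (PsiD S hS).F0 = 𝟙 _ := rfl

theorem PhiD_closed : IsClosedFunctor S (Tstr S hS) (PhiD S hS) := by
  refine ⟨?_, ?_, ?_, ?_⟩
  · intro X X' Y Y' f g
    simp
  · intro X
    simp
  · intro X
    simp
  · intro X Y Z
    simp

theorem PsiD_closed : IsClosedFunctor (Tstr S hS) S (PsiD S hS) := by
  refine ⟨?_, ?_, ?_, ?_⟩
  · intro X X' Y Y' f g
    simp
  · intro X
    simp
  · intro X
    simp
  · intro X Y Z
    simp

end

theorem CFD_ext {D : Type u} [Category.{v} D] {S : ClosedStruct C} {T : ClosedStruct D}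
    {A B : ClosedFunctorData S T} (hF : A.F = B.F) (hhat : HEq A.Fhat B.Fhat)
    (h0 : HEq A.F0 B.F0) : A = B := by
  cases A; cases B
  cases hF; cases hhat; cases h0
  rfl

end EKProof

/-- Every closed category (in the sense where `γ` is required to
be a bijection, axiom CC5) is isomorphic, as a closed category, to a closed
category in the sense of Eilenberg and Kelly, i.e. one equipped with a functor
`U : W ⥤ Set` satisfying CC0 (`U ∘ W̲(-,-) = W(-,-)`) and CC5'
(`U i_{W̲(X,X)}` sends `1_X` to `j_X`). -/
theorem isoToEilenbergKelly {C : Type u} [Category.{v} C]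
    (S : ClosedStruct C) (hS : IsClosedCat S) :
    ∃ (W : Type u) (_instW : Category.{v} W) (T : ClosedStruct W) (_hT : IsClosedCat T)
      (U : W ⥤ Type v) (hCC0 : T.ihom ⋙ U = Functor.hom W),
      (∀ X : W,
        U.map (T.i (T.h X X)).hom
          (cast (congrArg (fun (Fc : Wᵒᵖ × W ⥤ Type v) => Fc.obj (op X, X)) hCC0).symm
            (𝟙 X))
        = cast (congrArg (fun (Fc : Wᵒᵖ × W ⥤ Type v) => Fc.obj (op T.unit, T.h X X))
            hCC0).symm (T.j X)) ∧
      ∃ (Φ : ClosedFunctorData S T) (Ψ : ClosedFunctorData T S),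
        IsClosedFunctor S T Φ ∧ IsClosedFunctor T S Ψ ∧
        Φ.comp Ψ = ClosedFunctorData.idCF S ∧ Ψ.comp Φ = ClosedFunctorData.idCF T := by
  refine ⟨EKProof.EK S hS, inferInstance, EKProof.Tstr S hS, EKProof.Tstr_closed S hS,
    EKProof.U S hS, EKProof.cc0 S hS, EKProof.cc5' S hS, EKProof.PhiD S hS,
    EKProof.PsiD S hS, EKProof.PhiD_closed S hS, EKProof.PsiD_closed S hS, ?_, ?_⟩
  · have hF : ((EKProof.PhiD S hS).comp (EKProof.PsiD S hS)).F = 𝟭 C := by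
      refine CategoryTheory.Functor.ext (fun X => rfl) ?_
      intro X Y f
      simp [ClosedFunctorData.comp, EKProof.PhiD, EKProof.PsiD, EKProof.Efun,
        EKProof.E'fun]
      erw [eqToHom_refl, eqToHom_refl, Category.id_comp, Category.comp_id]
    refine EKProof.CFD_ext hF (heq_of_eq ?_) (heq_of_eq ?_)
    · funext X Y
      simp [ClosedFunctorData.comp, ClosedFunctorData.idCF]
    · simp [ClosedFunctorData.comp, ClosedFunctorData.idCF]
  · have hF : ((EKProof.PsiD S hS).comp (EKProof.PhiD S hS)).F
        = 𝟭 (EKProof.EK S hS) := by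
      refine CategoryTheory.Functor.ext (fun X => rfl) ?_
      intro X Y f
      simp [ClosedFunctorData.comp, EKProof.PhiD, EKProof.PsiD, EKProof.Efun,
        EKProof.E'fun]
      erw [eqToHom_refl, eqToHom_refl, EKProof.ge_symm_id, EKProof.ge_symm_id, Category.id_comp,
        Category.comp_id, Equiv.apply_symm_apply]
    refine EKProof.CFD_ext hF (heq_of_eq ?_) (heq_of_eq ?_)
    · funext X Y
      simp [ClosedFunctorData.comp, ClosedFunctorData.idCF]
    · simp [ClosedFunctorData.comp, ClosedFunctorData.idCF]
end

section
/- Let C be a closed multicategory. The assignments Y ↦ C̲(X;Y) together with the morphisms L^X_{YZ} : C̲(Y;Z) → C̲(C̲(X;Y); C̲(X;Z)), uniquely determined by (1, L^X_{YZ})·ev = μ (composition of the C-category C̲), define a C-functor L^X : C̲ → C̲; in particular L^X preserves identities and composition. -/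
universe u v

/-- A family of multimorphisms `f_i : Xss_i → Ys_i` (with matching lengths),
used to express simultaneous composition in a multicategory. -/
inductive HomFam (Obj : Type u) (Hom : List Obj → Obj → Type v) :
    List (List Obj) → List Obj → Type (max u v)
  | nil : HomFam Obj Hom [] []
  | cons {Xs Y Xss Ys} : Hom Xs Y → HomFam Obj Hom Xss Ys →
      HomFam Obj Hom (Xs :: Xss) (Y :: Ys)

/-- A family of families of multimorphisms. -/
inductive FamFam (Obj : Type u) (Hom : List Obj → Obj → Type v) :
    List (List (List Obj)) → List (List Obj) → Type (max u v)
  | nil : FamFam Obj Hom [] []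
  | cons {Xss Ys Xsss Yss} : HomFam Obj Hom Xss Ys → FamFam Obj Hom Xsss Yss →
      FamFam Obj Hom (Xss :: Xsss) (Ys :: Yss)

variable {Obj : Type u} {Hom : List Obj → Obj → Type v}

/-- The family of identities on a list of objects. -/
def idFam (ident : ∀ X, Hom [X] X) : ∀ Ys : List Obj,
    HomFam Obj Hom (Ys.map fun y => [y]) Ys
  | [] => .nil
  | y :: ys => .cons (ident y) (idFam ident ys)

/-- Concatenation of families. -/
def appendFam : ∀ {A B C D}, HomFam Obj Hom A B → HomFam Obj Hom C D →
    HomFam Obj Hom (A ++ C) (B ++ D)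
  | _, _, _, _, .nil, t => t
  | _, _, _, _, .cons f fs, t => .cons f (appendFam fs t)

/-- Flattening a family of families. -/
def flattenFam : ∀ {Xsss Yss}, FamFam Obj Hom Xsss Yss →
    HomFam Obj Hom Xsss.flatten Yss.flatten
  | _, _, .nil => .nil
  | _, _, .cons fs fss => appendFam fs (flattenFam fss)

/-- Componentwise composition of a family of families with a family. -/
def zipComp
    (comp : ∀ {Xss Ys Z}, HomFam Obj Hom Xss Ys → Hom Ys Z → Hom Xss.flatten Z) :
    ∀ {Xsss Yss Zs}, FamFam Obj Hom Xsss Yss → HomFam Obj Hom Yss Zs →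
      HomFam Obj Hom (Xsss.map List.flatten) Zs
  | _, _, _, .nil, .nil => .nil
  | _, _, _, .cons fs fss, .cons g gs => .cons (comp fs g) (zipComp comp fss gs)

/-- A multicategory: objects, multimorphisms `X₁,…,Xₙ → Y`, identities and an
associative and unital simultaneous composition `(f₁,…,fₙ) · g`. -/
structure Multicategory : Type (max (u + 1) (v + 1)) where
  Obj : Type u
  Hom : List Obj → Obj → Type v
  ident : ∀ X : Obj, Hom [X] X
  comp : ∀ {Xss : List (List Obj)} {Ys : List Obj} {Z : Obj},
    HomFam Obj Hom Xss Ys → Hom Ys Z → Hom Xss.flatten Z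
  id_comp : ∀ {Ys Z} (g : Hom Ys Z), HEq (comp (idFam ident Ys) g) g
  comp_id : ∀ {Xs Y} (f : Hom Xs Y), HEq (comp (.cons f .nil) (ident Y)) f
  assoc : ∀ {Xsss Yss Zs Z} (fss : FamFam Obj Hom Xsss Yss)
    (gs : HomFam Obj Hom Yss Zs) (h : Hom Zs Z),
    HEq (comp (zipComp (fun fs g => comp fs g) fss gs) h)
        (comp (flattenFam fss) (comp gs h))

namespace Multicategory

variable (M : Multicategory.{u, v})

theorem map_singleton_flatten (l : List M.Obj) :
    (l.map fun x => [x]).flatten = l := by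
  induction l <;> simp_all

theorem sflat (Xs Ys : List M.Obj) :
    ((Xs.map fun x => [x]) ++ [Ys]).flatten = Xs ++ Ys := by
  induction Xs <;> simp_all

theorem sflat2 (Xs Γ : List M.Obj) :
    (Xs :: (Γ.map fun x => [x])).flatten = Xs ++ Γ := by
  simp [List.flatten_cons, map_singleton_flatten]

/-- `(1,…,1,f) · g` : plugging `f` into the last argument of `g`. -/
def plug {Xs Ys : List M.Obj} {H Z : M.Obj} (f : M.Hom Ys H)
    (g : M.Hom (Xs ++ [H]) Z) : M.Hom (Xs ++ Ys) Z :=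
  cast (congrArg (M.Hom · Z) (M.sflat Xs Ys))
    (M.comp (appendFam (idFam M.ident Xs) (.cons f .nil)) g)

/-- `(f,1,…,1) · g` : plugging `f` into the first argument of `g`. -/
def plugFirst {Xs Γ : List M.Obj} {Y Z : M.Obj} (f : M.Hom Xs Y)
    (g : M.Hom (Y :: Γ) Z) : M.Hom (Xs ++ Γ) Z :=
  cast (congrArg (M.Hom · Z) (M.sflat2 Xs Γ))
    (M.comp (.cons f (idFam M.ident Γ)) g)

/-- `(f) · h` : composing a multimorphism with a unary morphism. -/
def postcomp {Γ : List M.Obj} {Y Z : M.Obj} (f : M.Hom Γ Y) (h : M.Hom [Y] Z) :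
    M.Hom Γ Z :=
  cast (congrArg (M.Hom · Z) (by simp : ([Γ].flatten : List M.Obj) = Γ))
    (M.comp (.cons f .nil) h)

/-- Composition in the underlying category. -/
def comp1 {X Y Z : M.Obj} (f : M.Hom [X] Y) (g : M.Hom [Y] Z) : M.Hom [X] Z :=
  M.postcomp f g

/-- `(a, b) · g` : binary simultaneous composition. -/
def pair {As Bs : List M.Obj} {A' B' Cc : M.Obj} (a : M.Hom As A') (b : M.Hom Bs B')
    (g : M.Hom [A', B'] Cc) : M.Hom (As ++ Bs) Cc :=
  cast (congrArg (M.Hom · Cc) (by simp : ([As, Bs].flatten : List M.Obj) = As ++ Bs))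
    (M.comp (.cons a (.cons b .nil)) g)

/-- `(f₁,…,fₘ,1) · g` for a family of unary morphisms `fᵢ`. -/
def sideComp {As Bs : List M.Obj} (fs : HomFam M.Obj M.Hom (As.map fun a => [a]) Bs)
    {H Z : M.Obj} (g : M.Hom (Bs ++ [H]) Z) : M.Hom (As ++ [H]) Z :=
  cast (congrArg (M.Hom · Z) (M.sflat As [H]))
    (M.comp (appendFam fs (.cons (M.ident H) .nil)) g)

end Multicategory

/-- The image of a family of multimorphisms under a multifunctor. -/
def mapFam {M N : Multicategory.{u, v}} (obj : M.Obj → N.Obj)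
    (map : ∀ {Xs Y}, M.Hom Xs Y → N.Hom (Xs.map obj) (obj Y)) :
    ∀ {Xss Ys}, HomFam M.Obj M.Hom Xss Ys →
      HomFam N.Obj N.Hom (Xss.map (List.map obj)) (Ys.map obj)
  | _, _, .nil => .nil
  | _, _, .cons f fs => .cons (map f) (mapFam obj @map fs)

/-- A multifunctor between multicategories. -/
structure Multifunctor (M N : Multicategory.{u, v}) : Type (max u v) where
  obj : M.Obj → N.Obj
  map : ∀ {Xs Y}, M.Hom Xs Y → N.Hom (Xs.map obj) (obj Y)
  map_ident : ∀ X, map (M.ident X) = N.ident (obj X)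
  map_comp : ∀ {Xss Ys Z} (fs : HomFam M.Obj M.Hom Xss Ys) (g : M.Hom Ys Z),
    HEq (map (M.comp fs g)) (N.comp (mapFam obj @map fs) (map g))

/-- A closed multicategory : a multicategory together with internal hom objects
and evaluation morphisms such that `φ : f ↦ (1,…,1,f)·ev` is a bijection. -/
structure ClosedMulticategory extends Multicategory.{u, v} where
  ihom : List Obj → Obj → Obj
  ev : ∀ (Xs : List Obj) (Z : Obj), Hom (Xs ++ [ihom Xs Z]) Z
  closed : ∀ (Xs Ys : List Obj) (Z : Obj),
    Function.Bijective
      (fun f : Hom Ys (ihom Xs Z) => toMulticategory.plug f (ev Xs Z))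

namespace ClosedMulticategory

variable (C : ClosedMulticategory.{u, v})

/-- The inverse of the bijection `φ` : currying. -/
noncomputable def curry {Xs Ys : List C.Obj} {Z : C.Obj}
    (f : C.Hom (Xs ++ Ys) Z) : C.Hom Ys (C.ihom Xs Z) :=
  (Equiv.ofBijective _ (C.closed Xs Ys Z)).symm f

/-- The covariant action `C̲(W₁,…,Wₘ; h)` of a unary morphism `h` on internal
homs, defined by `(1,…,1,C̲(Ws;h)) · ev_{Ws;B} = ev_{Ws;A} · h`. -/
noncomputable def homCovM (Ws : List C.Obj) {A B : C.Obj} (h : C.Hom [A] B) :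
    C.Hom [C.ihom Ws A] (C.ihom Ws B) :=
  C.curry (Xs := Ws) (C.toMulticategory.postcomp (C.ev Ws A) h)

/-- The contravariant action `C̲(h; Z)` of a unary morphism `h : A → B` on
internal homs, defined by `(1,C̲(h;Z)) · ev_{A;Z} = (h,1) · ev_{B;Z}`. -/
noncomputable def homContra {A B : C.Obj} (h : C.Hom [A] B) (Z : C.Obj) :
    C.Hom [C.ihom [B] Z] (C.ihom [A] Z) :=
  C.curry (Xs := [A]) (C.toMulticategory.plugFirst h (C.ev [B] Z))

/-- The contravariant action `C̲(f₁,…,fₘ; Z)` of a family of unary morphisms on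
internal homs. -/
noncomputable def homContraM {As Bs : List C.Obj}
    (fs : HomFam C.Obj C.Hom (As.map fun a => [a]) Bs) (Z : C.Obj) :
    C.Hom [C.ihom Bs Z] (C.ihom As Z) :=
  C.curry (Xs := As) (C.toMulticategory.sideComp fs (C.ev Bs Z))

/-- Composition `μ` of the `C`-category `C̲`, determined by
`(1_X, μ)·ev_{X;Z} = (ev_{X;Y},1)·ev_{Y;Z}`. -/
noncomputable def mu (X Y Z : C.Obj) :
    C.Hom [C.ihom [X] Y, C.ihom [Y] Z] (C.ihom [X] Z) :=
  C.curry (Xs := [X])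
    (C.toMulticategory.plugFirst (Xs := [X, C.ihom [X] Y]) (Γ := [C.ihom [Y] Z])
      (C.ev [X] Y) (C.ev [Y] Z))

/-- The identity `⟨1_X⟩ : () → C̲(X;X)` of the `C`-category `C̲`. -/
noncomputable def oneHom (X : C.Obj) : C.Hom [] (C.ihom [X] X) :=
  C.curry (Xs := [X]) (Ys := []) (C.ident X)

/-- The morphism `L^X_{YZ} : C̲(Y;Z) → C̲(C̲(X;Y);C̲(X;Z))`, uniquely determined
by `(1, L^X_{YZ}) · ev = μ`. -/
noncomputable def Lhat (X Y Z : C.Obj) :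
    C.Hom [C.ihom [Y] Z] (C.ihom [C.ihom [X] Y] (C.ihom [X] Z)) :=
  C.curry (Xs := [C.ihom [X] Y]) (C.mu X Y Z)

/-- The action `C̲(u;1) : C̲(1;X) → C̲(;X) = X` of a nullary morphism `u`. -/
def uAct {one : C.Obj} (u : C.Hom [] one) (X : C.Obj) :
    C.Hom [C.ihom [one] X] X :=
  C.toMulticategory.plugFirst u (C.ev [one] X)

/-- `(one, u)` is a unit object of the closed multicategory `C` if all the
morphisms `C̲(u;1) : C̲(1;X) → X` are invertible. -/
def IsUnitObj (one : C.Obj) (u : C.Hom [] one) : Prop :=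
  ∀ X : C.Obj, ∃ inv : C.Hom [X] (C.ihom [one] X),
    C.toMulticategory.comp1 (C.uAct u X) inv = C.ident (C.ihom [one] X) ∧
    C.toMulticategory.comp1 inv (C.uAct u X) = C.ident X

end ClosedMulticategory

/-- The closing transformation `F̲_{Xs;Z} : F C̲(Xs;Z) → D̲(F Xs; FZ)` of a
multifunctor between closed multicategories, i.e. the unique morphism with
`(1,…,1,F̲) · ev^D = F(ev^C)`. -/
noncomputable def closingTrans {C D : ClosedMulticategory.{u, v}}
    (F : Multifunctor C.toMulticategory D.toMulticategory)
    (Xs : List C.Obj) (Z : C.Obj) :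
    D.Hom [F.obj (C.ihom Xs Z)] (D.ihom (Xs.map F.obj) (F.obj Z)) :=
  D.curry (Xs := Xs.map F.obj)
    (cast (congrArg (D.Hom · (F.obj Z)) (@List.map_append _ _ F.obj Xs [C.ihom Xs Z]))
      (F.map (C.ev Xs Z)))

namespace Multicategory

variable {M : Multicategory.{u, v}}

theorem idc0 {B : M.Obj} (g : M.Hom [] B) : M.comp .nil g = g :=
  eq_of_heq (M.id_comp g)

theorem idc1 {A B : M.Obj} (g : M.Hom [A] B) :
    M.comp (.cons (M.ident A) .nil) g = g := eq_of_heq (M.id_comp g)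

theorem idc2 {A A' B : M.Obj} (g : M.Hom [A, A'] B) :
    M.comp (.cons (M.ident A) (.cons (M.ident A') .nil)) g = g :=
  eq_of_heq (M.id_comp g)

theorem cid0 {B : M.Obj} (f : M.Hom [] B) :
    M.comp (.cons f .nil) (M.ident B) = f := eq_of_heq (M.comp_id f)

theorem cid1 {A B : M.Obj} (f : M.Hom [A] B) :
    M.comp (.cons f .nil) (M.ident B) = f := eq_of_heq (M.comp_id f)

theorem cid2 {A A' B : M.Obj} (f : M.Hom [A, A'] B) :
    M.comp (.cons f .nil) (M.ident B) = f := eq_of_heq (M.comp_id f)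

theorem assoc1 {A R H D : M.Obj} (u : M.Hom [] R) (g : M.Hom [R] H)
    (h : M.Hom [A, H] D) :
    M.comp (.cons (M.ident A) (.cons (M.comp (.cons u .nil) g) .nil)) h
      = M.comp (.cons (M.ident A) (.cons u .nil))
          (M.comp (.cons (M.ident A) (.cons g .nil)) h) := by
  have e := eq_of_heq (M.assoc
    (.cons (.cons (M.ident A) .nil) (.cons (.cons u .nil) .nil))
    (.cons (M.ident A) (.cons g .nil)) h)
  simp only [zipComp, flattenFam, appendFam] at e
  rw [cid1 (M.ident A)] at e
  exact e

theorem assoc2 {A P Q R H D : M.Obj} (f : M.Hom [P, Q] R) (g : M.Hom [R] H)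
    (h : M.Hom [A, H] D) :
    M.comp (.cons (M.ident A) (.cons (M.comp (.cons f .nil) g) .nil)) h
      = M.comp (.cons (M.ident A) (.cons f .nil))
          (M.comp (.cons (M.ident A) (.cons g .nil)) h) := by
  have e := eq_of_heq (M.assoc
    (.cons (.cons (M.ident A) .nil) (.cons (.cons f .nil) .nil))
    (.cons (M.ident A) (.cons g .nil)) h)
  simp only [zipComp, flattenFam, appendFam] at e
  rw [cid1 (M.ident A)] at e
  exact e

theorem assoc3a {X P Q S T E Wo : M.Obj} (s : M.Hom [P] S) (t : M.Hom [Q] T)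
    (k : M.Hom [S, T] E) (h : M.Hom [X, E] Wo) :
    M.comp (.cons (M.ident X) (.cons (M.comp (.cons s (.cons t .nil)) k) .nil)) h
      = M.comp (.cons (M.ident X) (.cons s (.cons t .nil)))
          (M.comp (.cons (M.ident X) (.cons k .nil)) h) := by
  have e := eq_of_heq (M.assoc
    (.cons (.cons (M.ident X) .nil) (.cons (.cons s (.cons t .nil)) .nil))
    (.cons (M.ident X) (.cons k .nil)) h)
  simp only [zipComp, flattenFam, appendFam] at e
  rw [cid1 (M.ident X)] at e
  exact e

theorem assoc3b {X A P Q S T E Wo : M.Obj} (s : M.Hom [A] S) (t : M.Hom [P, Q] T)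
    (k : M.Hom [S, T] E) (h : M.Hom [X, E] Wo) :
    M.comp (.cons (M.ident X) (.cons (M.comp (.cons s (.cons t .nil)) k) .nil)) h
      = M.comp (.cons (M.ident X) (.cons s (.cons t .nil)))
          (M.comp (.cons (M.ident X) (.cons k .nil)) h) := by
  have e := eq_of_heq (M.assoc
    (.cons (.cons (M.ident X) .nil) (.cons (.cons s (.cons t .nil)) .nil))
    (.cons (M.ident X) (.cons k .nil)) h)
  simp only [zipComp, flattenFam, appendFam] at e
  rw [cid1 (M.ident X)] at e
  exact e

theorem assoc3c {X A P Q S T E Wo : M.Obj} (s : M.Hom [A, P] S) (t : M.Hom [Q] T)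
    (k : M.Hom [S, T] E) (h : M.Hom [X, E] Wo) :
    M.comp (.cons (M.ident X) (.cons (M.comp (.cons s (.cons t .nil)) k) .nil)) h
      = M.comp (.cons (M.ident X) (.cons s (.cons t .nil)))
          (M.comp (.cons (M.ident X) (.cons k .nil)) h) := by
  have e := eq_of_heq (M.assoc
    (.cons (.cons (M.ident X) .nil) (.cons (.cons s (.cons t .nil)) .nil))
    (.cons (M.ident X) (.cons k .nil)) h)
  simp only [zipComp, flattenFam, appendFam] at e
  rw [cid1 (M.ident X)] at e
  exact e

theorem assoc3d {X A S T E Wo : M.Obj} (s : M.Hom [A] S) (t : M.Hom [] T)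
    (k : M.Hom [S, T] E) (h : M.Hom [X, E] Wo) :
    M.comp (.cons (M.ident X) (.cons (M.comp (.cons s (.cons t .nil)) k) .nil)) h
      = M.comp (.cons (M.ident X) (.cons s (.cons t .nil)))
          (M.comp (.cons (M.ident X) (.cons k .nil)) h) := by
  have e := eq_of_heq (M.assoc
    (.cons (.cons (M.ident X) .nil) (.cons (.cons s (.cons t .nil)) .nil))
    (.cons (M.ident X) (.cons k .nil)) h)
  simp only [zipComp, flattenFam, appendFam] at e
  rw [cid1 (M.ident X)] at e
  exact e

theorem assoc4 {A P Q A1 B1 Bo D : M.Obj} (a : M.Hom [P] A1) (b : M.Hom [Q] B1)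
    (e1 : M.Hom [A, A1] Bo) (h : M.Hom [Bo, B1] D) :
    M.comp (.cons (M.comp (.cons (M.ident A) (.cons a .nil)) e1) (.cons b .nil)) h
      = M.comp (.cons (M.ident A) (.cons a (.cons b .nil)))
          (M.comp (.cons e1 (.cons (M.ident B1) .nil)) h) := by
  have e := eq_of_heq (M.assoc
    (.cons (.cons (M.ident A) (.cons a .nil)) (.cons (.cons b .nil) .nil))
    (.cons e1 (.cons (M.ident B1) .nil)) h)
  simp only [zipComp, flattenFam, appendFam] at e
  rw [cid1 b] at e
  exact e

theorem assoc5 {A P Q Bo B1 D : M.Obj} (f : M.Hom [A, P] Bo) (b : M.Hom [Q] B1)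
    (h : M.Hom [Bo, B1] D) :
    M.comp (.cons f (.cons b .nil)) h
      = M.comp (.cons f (.cons (M.ident Q) .nil))
          (M.comp (.cons (M.ident Bo) (.cons b .nil)) h) := by
  have e := eq_of_heq (M.assoc
    (.cons (.cons f .nil) (.cons (.cons (M.ident Q) .nil) .nil))
    (.cons (M.ident Bo) (.cons b .nil)) h)
  simp only [zipComp, flattenFam, appendFam] at e
  rw [cid2 f, idc1 b] at e
  exact e

theorem assoc6 {X A P Q Yo R Wo : M.Obj} (e1 : M.Hom [X, A] Yo)
    (t : M.Hom [P, Q] R) (h : M.Hom [Yo, R] Wo) :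
    M.comp (.cons e1 (.cons t .nil)) h
      = M.comp (.cons (M.ident X) (.cons (M.ident A) (.cons t .nil)))
          (M.comp (.cons e1 (.cons (M.ident R) .nil)) h) := by
  have e := eq_of_heq (M.assoc
    (.cons (.cons (M.ident X) (.cons (M.ident A) .nil)) (.cons (.cons t .nil) .nil))
    (.cons e1 (.cons (M.ident R) .nil)) h)
  simp only [zipComp, flattenFam, appendFam] at e
  rw [idc2 e1, cid2 t] at e
  exact e

theorem assoc6' {X A Yo B Wo : M.Obj} (e1 : M.Hom [X, A] Yo)
    (u : M.Hom [] B) (h : M.Hom [Yo, B] Wo) :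
    M.comp (.cons e1 (.cons u .nil)) h
      = M.comp (.cons (M.ident X) (.cons (M.ident A) (.cons u .nil)))
          (M.comp (.cons e1 (.cons (M.ident B) .nil)) h) := by
  have e := eq_of_heq (M.assoc
    (.cons (.cons (M.ident X) (.cons (M.ident A) .nil)) (.cons (.cons u .nil) .nil))
    (.cons e1 (.cons (M.ident B) .nil)) h)
  simp only [zipComp, flattenFam, appendFam] at e
  rw [idc2 e1, cid0 u] at e
  exact e

theorem assoc7 {X A P Q Yo R Wo : M.Obj} (e1 : M.Hom [X, A] Yo)
    (t : M.Hom [P, Q] R) (h : M.Hom [Yo, R] Wo) :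
    M.comp (.cons e1 (.cons t .nil)) h
      = M.comp (.cons e1 (.cons (M.ident P) (.cons (M.ident Q) .nil)))
          (M.comp (.cons (M.ident Yo) (.cons t .nil)) h) := by
  have e := eq_of_heq (M.assoc
    (.cons (.cons e1 .nil) (.cons (.cons (M.ident P) (.cons (M.ident Q) .nil)) .nil))
    (.cons (M.ident Yo) (.cons t .nil)) h)
  simp only [zipComp, flattenFam, appendFam] at e
  rw [cid2 e1, idc2 t] at e
  exact e

theorem assoc8 {X A Yo B Wo : M.Obj} (e1 : M.Hom [X, A] Yo)
    (u : M.Hom [] B) (h : M.Hom [Yo, B] Wo) :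
    M.comp (.cons e1 (.cons u .nil)) h
      = M.comp (.cons e1 .nil)
          (M.comp (.cons (M.ident Yo) (.cons u .nil)) h) := by
  have e := eq_of_heq (M.assoc
    (.cons (.cons e1 .nil) (.cons .nil .nil))
    (.cons (M.ident Yo) (.cons u .nil)) h)
  simp only [zipComp, flattenFam, appendFam] at e
  rw [cid2 e1, idc0 u] at e
  exact e

theorem assoc9 {X A P Y' P' Q Zo Wo : M.Obj} (p : M.Hom [X, A] Y') (q : M.Hom [P] P')
    (e1 : M.Hom [Y', P'] Zo) (h : M.Hom [Zo, Q] Wo) :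
    M.comp (.cons (M.comp (.cons p (.cons q .nil)) e1) (.cons (M.ident Q) .nil)) h
      = M.comp (.cons p (.cons q (.cons (M.ident Q) .nil)))
          (M.comp (.cons e1 (.cons (M.ident Q) .nil)) h) := by
  have e := eq_of_heq (M.assoc
    (.cons (.cons p (.cons q .nil)) (.cons (.cons (M.ident Q) .nil) .nil))
    (.cons e1 (.cons (M.ident Q) .nil)) h)
  simp only [zipComp, flattenFam, appendFam] at e
  rw [idc1 (M.ident Q)] at e
  exact e

theorem assoc10 {X A P X' B' Q Zo Wo : M.Obj} (p : M.Hom [X] X') (q : M.Hom [A, P] B')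
    (e1 : M.Hom [X', B'] Zo) (h : M.Hom [Zo, Q] Wo) :
    M.comp (.cons (M.comp (.cons p (.cons q .nil)) e1) (.cons (M.ident Q) .nil)) h
      = M.comp (.cons p (.cons q (.cons (M.ident Q) .nil)))
          (M.comp (.cons e1 (.cons (M.ident Q) .nil)) h) := by
  have e := eq_of_heq (M.assoc
    (.cons (.cons p (.cons q .nil)) (.cons (.cons (M.ident Q) .nil) .nil))
    (.cons e1 (.cons (M.ident Q) .nil)) h)
  simp only [zipComp, flattenFam, appendFam] at e
  rw [idc1 (M.ident Q)] at e
  exact e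

end Multicategory

namespace ClosedMulticategory

variable (C : ClosedMulticategory.{u, v})

theorem plug_curry {Xs Ys : List C.Obj} {Z : C.Obj} (f : C.Hom (Xs ++ Ys) Z) :
    C.toMulticategory.plug (C.curry f) (C.ev Xs Z) = f :=
  (Equiv.ofBijective _ (C.closed Xs Ys Z)).apply_symm_apply f

theorem curry_inj {Xs Ys : List C.Obj} {Z : C.Obj} {f g : C.Hom Ys (C.ihom Xs Z)}
    (h : C.toMulticategory.plug f (C.ev Xs Z) = C.toMulticategory.plug g (C.ev Xs Z)) :
    f = g := (C.closed Xs Ys Z).injective h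

theorem plug_Lhat (X Y Z : C.Obj) :
    C.comp (.cons (C.ident (C.ihom [X] Y)) (.cons (C.Lhat X Y Z) .nil))
        (C.ev [C.ihom [X] Y] (C.ihom [X] Z)) = C.mu X Y Z :=
  C.plug_curry (Xs := [C.ihom [X] Y]) (Ys := [C.ihom [Y] Z]) (C.mu X Y Z)

theorem plug_mu (X Y Z : C.Obj) :
    C.comp (.cons (C.ident X) (.cons (C.mu X Y Z) .nil)) (C.ev [X] Z)
      = C.comp (.cons (C.ev [X] Y) (.cons (C.ident (C.ihom [Y] Z)) .nil))
          (C.ev [Y] Z) :=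
  C.plug_curry (Xs := [X]) (Ys := [C.ihom [X] Y, C.ihom [Y] Z])
    (C.comp (.cons (C.ev [X] Y) (.cons (C.ident (C.ihom [Y] Z)) .nil)) (C.ev [Y] Z))

theorem plug_oneHom (Y : C.Obj) :
    C.toMulticategory.plug (C.oneHom Y) (C.ev [Y] Y) = C.ident Y :=
  C.plug_curry _

theorem plug_oneHom' (Y : C.Obj) :
    C.comp (.cons (C.ident Y) (.cons (C.oneHom Y) .nil)) (C.ev [Y] Y) = C.ident Y :=
  C.plug_curry (Xs := [Y]) (Ys := []) (C.ident Y)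

end ClosedMulticategory

open ClosedMulticategory in
/-- In a closed multicategory `C`, the assignment
`Y ↦ C̲(X;Y)` together with the morphisms
`L^X_{YZ} : C̲(Y;Z) → C̲(C̲(X;Y);C̲(X;Z))` (uniquely determined by
`(1,L^X_{YZ})·ev = μ`) defines a `C`-functor `L^X : C̲ → C̲`: it preserves
identities and composition. -/
theorem Lhat_CFunctor (C : ClosedMulticategory.{u, v}) (X : C.Obj) :
    (∀ Y : C.Obj,
      C.toMulticategory.postcomp (C.oneHom Y) (C.Lhat X Y Y)
        = C.oneHom (C.ihom [X] Y)) ∧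
    (∀ Y Z W : C.Obj,
      C.toMulticategory.postcomp (C.mu Y Z W) (C.Lhat X Y W)
        = C.toMulticategory.pair (C.Lhat X Y Z) (C.Lhat X Z W)
            (C.mu (C.ihom [X] Y) (C.ihom [X] Z) (C.ihom [X] W))) := by
  constructor
  · intro Y
    apply C.curry_inj
    rw [C.plug_oneHom]
    calc C.toMulticategory.plug
          (C.toMulticategory.postcomp (C.oneHom Y) (C.Lhat X Y Y))
          (C.ev [C.ihom [X] Y] (C.ihom [X] Y))
        = C.comp (.cons (C.ident (C.ihom [X] Y))
            (.cons (C.comp (.cons (C.oneHom Y) .nil) (C.Lhat X Y Y)) .nil))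
            (C.ev [C.ihom [X] Y] (C.ihom [X] Y)) := rfl
      _ = C.comp (.cons (C.ident (C.ihom [X] Y)) (.cons (C.oneHom Y) .nil))
            (C.comp (.cons (C.ident (C.ihom [X] Y)) (.cons (C.Lhat X Y Y) .nil))
              (C.ev [C.ihom [X] Y] (C.ihom [X] Y))) := Multicategory.assoc1 _ _ _
      _ = C.comp (.cons (C.ident (C.ihom [X] Y)) (.cons (C.oneHom Y) .nil))
            (C.mu X Y Y) := by rw [C.plug_Lhat]
      _ = C.ident (C.ihom [X] Y) := ?_
    apply C.curry_inj
    calc C.toMulticategory.plug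
          (C.comp (.cons (C.ident (C.ihom [X] Y)) (.cons (C.oneHom Y) .nil))
            (C.mu X Y Y)) (C.ev [X] Y)
        = C.comp (.cons (C.ident X)
            (.cons (C.comp (.cons (C.ident (C.ihom [X] Y)) (.cons (C.oneHom Y) .nil))
              (C.mu X Y Y)) .nil)) (C.ev [X] Y) := rfl
      _ = C.comp (.cons (C.ident X)
            (.cons (C.ident (C.ihom [X] Y)) (.cons (C.oneHom Y) .nil)))
            (C.comp (.cons (C.ident X) (.cons (C.mu X Y Y) .nil)) (C.ev [X] Y)) :=
          Multicategory.assoc3d _ _ _ _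
      _ = C.comp (.cons (C.ident X)
            (.cons (C.ident (C.ihom [X] Y)) (.cons (C.oneHom Y) .nil)))
            (C.comp (.cons (C.ev [X] Y) (.cons (C.ident (C.ihom [Y] Y)) .nil))
              (C.ev [Y] Y)) := by rw [C.plug_mu]
      _ = C.comp (.cons (C.ev [X] Y) (.cons (C.oneHom Y) .nil)) (C.ev [Y] Y) :=
          (Multicategory.assoc6' _ _ _).symm
      _ = C.comp (.cons (C.ev [X] Y) .nil)
            (C.comp (.cons (C.ident Y) (.cons (C.oneHom Y) .nil)) (C.ev [Y] Y)) :=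
          Multicategory.assoc8 _ _ _
      _ = C.comp (.cons (C.ev [X] Y) .nil) (C.ident Y) := by rw [C.plug_oneHom']
      _ = C.ev [X] Y := Multicategory.cid2 _
      _ = C.toMulticategory.plug (C.ident (C.ihom [X] Y)) (C.ev [X] Y) :=
          (Multicategory.idc2 _).symm
  · intro Y Z W
    apply C.curry_inj
    have key : C.comp (.cons (C.ident (C.ihom [X] Y)) (.cons (C.mu Y Z W) .nil))
          (C.mu X Y W)
        = C.comp (.cons (C.mu X Y Z) (.cons (C.ident (C.ihom [Z] W)) .nil))
            (C.mu X Z W) := by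
      apply C.curry_inj
      calc C.toMulticategory.plug
            (C.comp (.cons (C.ident (C.ihom [X] Y)) (.cons (C.mu Y Z W) .nil))
              (C.mu X Y W)) (C.ev [X] W)
          = C.comp (.cons (C.ident X)
              (.cons (C.comp (.cons (C.ident (C.ihom [X] Y)) (.cons (C.mu Y Z W) .nil))
                (C.mu X Y W)) .nil)) (C.ev [X] W) := rfl
        _ = C.comp (.cons (C.ident X)
              (.cons (C.ident (C.ihom [X] Y)) (.cons (C.mu Y Z W) .nil)))
              (C.comp (.cons (C.ident X) (.cons (C.mu X Y W) .nil)) (C.ev [X] W)) :=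
            Multicategory.assoc3b _ _ _ _
        _ = C.comp (.cons (C.ident X)
              (.cons (C.ident (C.ihom [X] Y)) (.cons (C.mu Y Z W) .nil)))
              (C.comp (.cons (C.ev [X] Y) (.cons (C.ident (C.ihom [Y] W)) .nil))
                (C.ev [Y] W)) := by rw [C.plug_mu]
        _ = C.comp (.cons (C.ev [X] Y) (.cons (C.mu Y Z W) .nil)) (C.ev [Y] W) :=
            (Multicategory.assoc6 _ _ _).symm
        _ = C.comp (.cons (C.ev [X] Y)
              (.cons (C.ident (C.ihom [Y] Z)) (.cons (C.ident (C.ihom [Z] W)) .nil)))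
              (C.comp (.cons (C.ident Y) (.cons (C.mu Y Z W) .nil)) (C.ev [Y] W)) :=
            Multicategory.assoc7 _ _ _
        _ = C.comp (.cons (C.ev [X] Y)
              (.cons (C.ident (C.ihom [Y] Z)) (.cons (C.ident (C.ihom [Z] W)) .nil)))
              (C.comp (.cons (C.ev [Y] Z) (.cons (C.ident (C.ihom [Z] W)) .nil))
                (C.ev [Z] W)) := by rw [C.plug_mu]
        _ = C.comp (.cons
              (C.comp (.cons (C.ev [X] Y) (.cons (C.ident (C.ihom [Y] Z)) .nil))
                (C.ev [Y] Z))
              (.cons (C.ident (C.ihom [Z] W)) .nil)) (C.ev [Z] W) :=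
            (Multicategory.assoc9 _ _ _ _).symm
        _ = C.comp (.cons (C.ident X)
              (.cons (C.mu X Y Z) (.cons (C.ident (C.ihom [Z] W)) .nil)))
              (C.comp (.cons (C.ev [X] Z) (.cons (C.ident (C.ihom [Z] W)) .nil))
                (C.ev [Z] W)) := by
            rw [← C.plug_mu X Y Z]
            exact Multicategory.assoc10 _ _ _ _
        _ = C.comp (.cons (C.ident X)
              (.cons (C.mu X Y Z) (.cons (C.ident (C.ihom [Z] W)) .nil)))
              (C.comp (.cons (C.ident X) (.cons (C.mu X Z W) .nil)) (C.ev [X] W)) := by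
            rw [← C.plug_mu X Z W]
        _ = C.comp (.cons (C.ident X)
              (.cons (C.comp (.cons (C.mu X Y Z) (.cons (C.ident (C.ihom [Z] W)) .nil))
                (C.mu X Z W)) .nil)) (C.ev [X] W) :=
            (Multicategory.assoc3c _ _ _ _).symm
        _ = C.toMulticategory.plug
              (C.comp (.cons (C.mu X Y Z) (.cons (C.ident (C.ihom [Z] W)) .nil))
                (C.mu X Z W)) (C.ev [X] W) := rfl
    calc C.toMulticategory.plug
          (C.toMulticategory.postcomp (C.mu Y Z W) (C.Lhat X Y W))
          (C.ev [C.ihom [X] Y] (C.ihom [X] W))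
        = C.comp (.cons (C.ident (C.ihom [X] Y))
            (.cons (C.comp (.cons (C.mu Y Z W) .nil) (C.Lhat X Y W)) .nil))
            (C.ev [C.ihom [X] Y] (C.ihom [X] W)) := rfl
      _ = C.comp (.cons (C.ident (C.ihom [X] Y)) (.cons (C.mu Y Z W) .nil))
            (C.comp (.cons (C.ident (C.ihom [X] Y)) (.cons (C.Lhat X Y W) .nil))
              (C.ev [C.ihom [X] Y] (C.ihom [X] W))) := Multicategory.assoc2 _ _ _
      _ = C.comp (.cons (C.ident (C.ihom [X] Y)) (.cons (C.mu Y Z W) .nil))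
            (C.mu X Y W) := by rw [C.plug_Lhat]
      _ = C.comp (.cons (C.mu X Y Z) (.cons (C.ident (C.ihom [Z] W)) .nil))
            (C.mu X Z W) := key
      _ = C.comp (.cons (C.mu X Y Z) (.cons (C.Lhat X Z W) .nil))
            (C.ev [C.ihom [X] Z] (C.ihom [X] W)) :=
          ((Multicategory.assoc5 (C.mu X Y Z) (C.Lhat X Z W)
              (C.ev [C.ihom [X] Z] (C.ihom [X] W))).trans
            (by rw [C.plug_Lhat])).symm
      _ = C.comp (.cons (C.ident (C.ihom [X] Y))
            (.cons (C.Lhat X Y Z) (.cons (C.Lhat X Z W) .nil)))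
            (C.comp (.cons (C.ev [C.ihom [X] Y] (C.ihom [X] Z))
              (.cons (C.ident (C.ihom [C.ihom [X] Z]  (C.ihom [X] W))) .nil))
              (C.ev [C.ihom [X] Z] (C.ihom [X] W))) := by
          rw [← C.plug_Lhat X Y Z]
          exact Multicategory.assoc4 _ _ _ _
      _ = C.comp (.cons (C.ident (C.ihom [X] Y))
            (.cons (C.Lhat X Y Z) (.cons (C.Lhat X Z W) .nil)))
            (C.comp (.cons (C.ident (C.ihom [X] Y))
              (.cons (C.mu (C.ihom [X] Y) (C.ihom [X] Z) (C.ihom [X] W)) .nil))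
              (C.ev [C.ihom [X] Y] (C.ihom [X] W))) := by
          rw [← C.plug_mu (C.ihom [X] Y) (C.ihom [X] Z) (C.ihom [X] W)]
      _ = C.comp (.cons (C.ident (C.ihom [X] Y))
            (.cons (C.comp (.cons (C.Lhat X Y Z) (.cons (C.Lhat X Z W) .nil))
              (C.mu (C.ihom [X] Y) (C.ihom [X] Z) (C.ihom [X] W))) .nil))
            (C.ev [C.ihom [X] Y] (C.ihom [X] W)) :=
          (Multicategory.assoc3a _ _ _ _).symm
      _ = C.toMulticategory.plug
            (C.toMulticategory.pair (C.Lhat X Y Z) (C.Lhat X Z W)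
              (C.mu (C.ihom [X] Y) (C.ihom [X] Z) (C.ihom [X] W)))
            (C.ev [C.ihom [X] Y] (C.ihom [X] W)) := rfl
end
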